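/- For pointed types K and X and n ≥ 1, there is a pointed equivalence (K ∧ X)^{∧n} ≃ K^{∧n} ∧ X^{∧n} which is equivariant for the actions of Perm(Fin n) permuting the smash factors on both sides. -/

import Mathlib

/-- The smash product of two pointed types `(A, a0)` and `(B, b0)`: the product with the
wedge `A ∨ B` collapsed to a point. -/
def Smash (A : Type*) (B : Type*) (a0 : A) (b0 : B) : Type _ :=
  Quot (fun p q : A × B => p = q ∨
    ((p.1 = a0 ∨ p.2 = b0) ∧ (q.1 = a0 ∨ q.2 = b0)))

/-- The basepoint of the smash product. -/
def Smash.pt {A : Type*} {B : Type*} (a0 : A) (b0 : B) : Smash A B a0 b0 :=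
  Quot.mk _ (a0, b0)

/-- The map of smash products induced by a pair of pointed maps. -/
def Smash.map {A B A' B' : Type*} {a0 : A} {b0 : B} {a0' : A'} {b0' : B'}
    (f : A → A') (g : B → B') (hf : f a0 = a0') (hg : g b0 = b0') :
    Smash A B a0 b0 → Smash A' B' a0' b0' :=
  Quot.map (fun p => (f p.1, g p.2)) (by
    rintro p q (rfl | ⟨h1, h2⟩)
    · exact Or.inl rfl
    · refine Or.inr ⟨?_, ?_⟩
      · rcases h1 with h | h
        · exact Or.inl (by simp [h, hf])
        · exact Or.inr (by simp [h, hg])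
      · rcases h2 with h | h
        · exact Or.inl (by simp [h, hf])
        · exact Or.inr (by simp [h, hg]))

/-- The `n`-fold smash power of a pointed type `(K, k0)`: the quotient of `K^n`
collapsing all tuples having some coordinate equal to the basepoint. -/
def SmashPow (K : Type*) (k0 : K) (n : ℕ) : Type _ :=
  Quot (fun p q : Fin n → K => p = q ∨ ((∃ i, p i = k0) ∧ (∃ i, q i = k0)))

/-- The basepoint of the smash power. -/
def SmashPow.pt (K : Type*) (k0 : K) (n : ℕ) : SmashPow K k0 n :=
  Quot.mk _ (fun _ => k0)

/-- The action of a permutation of `Fin n` on the `n`-fold smash power, permuting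
the smash factors. -/
def SmashPow.perm {K : Type*} {k0 : K} {n : ℕ} (σ : Equiv.Perm (Fin n)) :
    SmashPow K k0 n → SmashPow K k0 n :=
  Quot.map (fun p => p ∘ σ) (by
    rintro p q (rfl | ⟨⟨i, hi⟩, ⟨j, hj⟩⟩)
    · exact Or.inl rfl
    · exact Or.inr ⟨⟨σ.symm i, by simpa using hi⟩, ⟨σ.symm j, by simpa using hj⟩⟩)

theorem SmashPow.perm_pt {K : Type*} (k0 : K) (n : ℕ) (σ : Equiv.Perm (Fin n)) :
    SmashPow.perm σ (SmashPow.pt K k0 n) = SmashPow.pt K k0 n := rfl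


section Aux

theorem quot_orBad_equiv {α : Type*} (Bad : α → Prop) :
    Equivalence (fun p q : α => p = q ∨ (Bad p ∧ Bad q)) := by
  constructor
  · intro x; exact Or.inl rfl
  · rintro p q (rfl | ⟨h1, h2⟩)
    · exact Or.inl rfl
    · exact Or.inr ⟨h2, h1⟩
  · rintro p q s (rfl | ⟨h1, h2⟩) (rfl | ⟨h3, h4⟩)
    · exact Or.inl rfl
    · exact Or.inr ⟨h3, h4⟩
    · exact Or.inr ⟨h1, h2⟩
    · exact Or.inr ⟨h1, h4⟩

theorem quot_orBad_eq {α : Type*} (Bad : α → Prop) (a b : α) :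
    Quot.mk (fun p q => p = q ∨ (Bad p ∧ Bad q)) a =
      Quot.mk (fun p q => p = q ∨ (Bad p ∧ Bad q)) b ↔ (a = b ∨ (Bad a ∧ Bad b)) := by
  rw [Quot.eq]
  exact (quot_orBad_equiv Bad).eqvGen_iff

theorem smash_mk_eq {A B : Type*} (a0 : A) (b0 : B) (p q : A × B) :
    (Quot.mk _ p : Smash A B a0 b0) = Quot.mk _ q ↔
      p = q ∨ ((p.1 = a0 ∨ p.2 = b0) ∧ (q.1 = a0 ∨ q.2 = b0)) :=
  quot_orBad_eq (fun p : A × B => p.1 = a0 ∨ p.2 = b0) p q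

theorem smash_mk_eq_pt {A B : Type*} (a0 : A) (b0 : B) (p : A × B) :
    (Quot.mk _ p : Smash A B a0 b0) = Smash.pt a0 b0 ↔ (p.1 = a0 ∨ p.2 = b0) := by
  rw [Smash.pt, smash_mk_eq]
  constructor
  · rintro (rfl | ⟨h, -⟩)
    · exact Or.inl rfl
    · exact h
  · intro h; exact Or.inr ⟨h, Or.inl rfl⟩

theorem smashPow_mk_eq {K : Type*} (k0 : K) (n : ℕ) (p q : Fin n → K) :
    (Quot.mk _ p : SmashPow K k0 n) = Quot.mk _ q ↔
      p = q ∨ ((∃ i, p i = k0) ∧ (∃ i, q i = k0)) :=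
  quot_orBad_eq (fun p : Fin n → K => ∃ i, p i = k0) p q

theorem smashPow_mk_eq_pt {K : Type*} (k0 : K) {n : ℕ} (hn : 1 ≤ n) (p : Fin n → K) :
    (Quot.mk _ p : SmashPow K k0 n) = SmashPow.pt K k0 n ↔ ∃ i, p i = k0 := by
  rw [SmashPow.pt, smashPow_mk_eq]
  constructor
  · rintro (rfl | ⟨h, -⟩)
    · exact ⟨⟨0, hn⟩, rfl⟩
    · exact h
  · intro h; exact Or.inr ⟨h, ⟨0, hn⟩, rfl⟩

/-- Lift of the identity on `(K × X)^n` to the iterated-smash side. -/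
def phiMap {K X : Type*} (k0 : K) (x0 : X) (n : ℕ) (f : Fin n → K × X) :
    SmashPow (Smash K X k0 x0) (Smash.pt k0 x0) n :=
  Quot.mk _ (fun i => Quot.mk _ (f i))

/-- Lift of the identity on `(K × X)^n` to the smash-of-smash-powers side. -/
def psiMap {K X : Type*} (k0 : K) (x0 : X) (n : ℕ) (f : Fin n → K × X) :
    Smash (SmashPow K k0 n) (SmashPow X x0 n) (SmashPow.pt K k0 n) (SmashPow.pt X x0 n) :=
  Quot.mk _ (Quot.mk _ (fun i => (f i).1), Quot.mk _ (fun i => (f i).2))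

theorem phiMap_surj {K X : Type*} (k0 : K) (x0 : X) (n : ℕ)
    (z : SmashPow (Smash K X k0 x0) (Smash.pt k0 x0) n) :
    ∃ f, phiMap k0 x0 n f = z := by
  induction z using Quot.ind with
  | _ p =>
    refine ⟨fun i => Quot.out (p i), ?_⟩
    exact congrArg (Quot.mk _) (funext fun i => Quot.out_eq (p i))

theorem psiMap_surj {K X : Type*} (k0 : K) (x0 : X) (n : ℕ)
    (z : Smash (SmashPow K k0 n) (SmashPow X x0 n)
      (SmashPow.pt K k0 n) (SmashPow.pt X x0 n)) :
    ∃ f, psiMap k0 x0 n f = z := by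
  induction z using Quot.ind with
  | _ p =>
    refine ⟨fun i => (Quot.out p.1 i, Quot.out p.2 i), ?_⟩
    refine congrArg (Quot.mk _) ?_
    exact Prod.ext (Quot.out_eq p.1) (Quot.out_eq p.2)

theorem phiMap_eq_iff {K X : Type*} (k0 : K) (x0 : X) {n : ℕ} (hn : 1 ≤ n)
    (f g : Fin n → K × X) :
    phiMap k0 x0 n f = phiMap k0 x0 n g ↔
      f = g ∨ (((∃ i, (f i).1 = k0) ∨ (∃ i, (f i).2 = x0)) ∧
        ((∃ i, (g i).1 = k0) ∨ (∃ i, (g i).2 = x0))) := by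
  refine (smashPow_mk_eq _ n _ _).trans ?_
  refine Iff.trans (or_congr funext_iff (and_congr (exists_congr fun i => smash_mk_eq_pt k0 x0 (f i)) (exists_congr fun i => smash_mk_eq_pt k0 x0 (g i)))) ?_
  simp only [funext_iff, smash_mk_eq, exists_or]
  constructor
  · rintro (h | h)
    · by_cases hfg : ∀ i, f i = g i
      · exact Or.inl hfg
      · right
        push_neg at hfg
        obtain ⟨i, hi⟩ := hfg
        rcases h i with h' | ⟨h1, h2⟩
        · exact absurd h' hi
        · constructor
          · rcases h1 with h1 | h1
            · exact Or.inl ⟨i, h1⟩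
            · exact Or.inr ⟨i, h1⟩
          · rcases h2 with h2 | h2
            · exact Or.inl ⟨i, h2⟩
            · exact Or.inr ⟨i, h2⟩
    · exact Or.inr h
  · rintro (h | h)
    · exact Or.inl fun i => Or.inl (h i)
    · exact Or.inr h

theorem psiMap_eq_iff {K X : Type*} (k0 : K) (x0 : X) {n : ℕ} (hn : 1 ≤ n)
    (f g : Fin n → K × X) :
    psiMap k0 x0 n f = psiMap k0 x0 n g ↔
      f = g ∨ (((∃ i, (f i).1 = k0) ∨ (∃ i, (f i).2 = x0)) ∧
        ((∃ i, (g i).1 = k0) ∨ (∃ i, (g i).2 = x0))) := by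
  refine ((smash_mk_eq _ _ _ _).trans (or_congr (Prod.ext_iff.trans (and_congr (smashPow_mk_eq k0 n _ _) (smashPow_mk_eq x0 n _ _))) (and_congr (or_congr (smashPow_mk_eq_pt k0 hn _) (smashPow_mk_eq_pt x0 hn _)) (or_congr (smashPow_mk_eq_pt k0 hn _) (smashPow_mk_eq_pt x0 hn _))))).trans ?_
  simp only [Prod.mk.injEq, smashPow_mk_eq k0 n, smashPow_mk_eq x0 n,
    smashPow_mk_eq_pt k0 hn, smashPow_mk_eq_pt x0 hn, funext_iff, Prod.ext_iff, forall_and]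
  tauto

end Aux

/-- For pointed types `K`, `X` and `n ≥ 1`, there is a pointed equivalence
`(K ∧ X)^{∧n} ≃ K^{∧n} ∧ X^{∧n}` which is equivariant for the permutation actions of
`Perm (Fin n)` on both sides. -/
theorem smashPow_of_smash_equiv (K X : Type*) (k0 : K) (x0 : X) (n : ℕ) (hn : 1 ≤ n) :
    ∃ e : SmashPow (Smash K X k0 x0) (Smash.pt k0 x0) n ≃
          Smash (SmashPow K k0 n) (SmashPow X x0 n)
            (SmashPow.pt K k0 n) (SmashPow.pt X x0 n),
      e (SmashPow.pt _ _ n) = Smash.pt _ _ ∧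
      ∀ (σ : Equiv.Perm (Fin n)) (z : SmashPow (Smash K X k0 x0) (Smash.pt k0 x0) n),
        e (SmashPow.perm σ z) =
          Smash.map (SmashPow.perm σ) (SmashPow.perm σ)
            (SmashPow.perm_pt k0 n σ) (SmashPow.perm_pt x0 n σ) (e z) := by
  classical
  have key : ∀ f g : Fin n → K × X,
      phiMap k0 x0 n f = phiMap k0 x0 n g ↔ psiMap k0 x0 n f = psiMap k0 x0 n g := by
    intro f g
    rw [phiMap_eq_iff k0 x0 hn f g, psiMap_eq_iff k0 x0 hn f g]
  choose invφ hinvφ using phiMap_surj k0 x0 n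
  choose invψ hinvψ using psiMap_surj k0 x0 n
  have hcomp : ∀ f, psiMap k0 x0 n (invφ (phiMap k0 x0 n f)) = psiMap k0 x0 n f :=
    fun f => (key _ _).mp (hinvφ (phiMap k0 x0 n f))
  refine ⟨⟨fun z => psiMap k0 x0 n (invφ z), fun w => phiMap k0 x0 n (invψ w), ?_, ?_⟩,
    ?_, ?_⟩
  · intro z
    have h1 : psiMap k0 x0 n (invψ (psiMap k0 x0 n (invφ z))) = psiMap k0 x0 n (invφ z) :=
      hinvψ _
    have h2 := (key _ _).mpr h1
    simp only []
    rw [h2, hinvφ]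
  · intro w
    have h1 : phiMap k0 x0 n (invφ (phiMap k0 x0 n (invψ w))) = phiMap k0 x0 n (invψ w) :=
      hinvφ _
    have h2 := (key _ _).mp h1
    simp only []
    rw [h2, hinvψ]
  · show psiMap k0 x0 n (invφ (SmashPow.pt _ _ n)) = Smash.pt _ _
    have : SmashPow.pt (Smash K X k0 x0) (Smash.pt k0 x0) n =
        phiMap k0 x0 n (fun _ => (k0, x0)) := rfl
    rw [this, hcomp]
    rfl
  · intro σ z
    obtain ⟨f, rfl⟩ := phiMap_surj k0 x0 n z
    show psiMap k0 x0 n (invφ (SmashPow.perm σ (phiMap k0 x0 n f))) =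
      Smash.map (SmashPow.perm σ) (SmashPow.perm σ) (SmashPow.perm_pt k0 n σ)
        (SmashPow.perm_pt x0 n σ) (psiMap k0 x0 n (invφ (phiMap k0 x0 n f)))
    have hp : SmashPow.perm σ (phiMap k0 x0 n f) = phiMap k0 x0 n (f ∘ σ) := rfl
    rw [hp, hcomp, hcomp]
    rfl
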